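/- Let C₂ = [[a,c],[c,b]] be a 2×2 real symmetric positive-semidefinite matrix with a ≥ b, and take s = 1. Define m* ∈ [0,1] by: m* := 0 if c = 0 or ab ≤ 1; m* := 1 if c ≠ 0 and ab − 1 ≥ c²; and m* := √((ab−1)/c²) if c ≠ 0 and 0 < ab − 1 < c². Then the mask M* = [[1,m*],[m*,1]] is an optimal mask: linx(C₂,1;M*) ≤ linx(C₂,1;M) for every order-2 mask M. -/

import Mathlib

open Matrix Real Set

noncomputable section

/-- The feasible polytope `P(n,s)`. -/
def PP (n s : ℕ) : Set (Fin n → ℝ) :=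
  {x | (∑ i, x i) = (s : ℝ) ∧ ∀ i, 0 ≤ x i ∧ x i ≤ 1}

/-- The linx objective `f(C,s;x)`. -/
def fLinx {n : ℕ} (C : Matrix (Fin n) (Fin n) ℝ) (x : Fin n → ℝ) : ℝ :=
  (1 / 2) * Real.log ((C * Matrix.diagonal x * C + Matrix.diagonal fun i => 1 - x i).det)

/-- A mask of order `n`: a positive-semidefinite matrix with unit diagonal. -/
def IsMask {n : ℕ} (M : Matrix (Fin n) (Fin n) ℝ) : Prop :=
  M.PosSemidef ∧ ∀ i, M i i = 1

/-- The masked linx bound `linx(C,s;M)`. -/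
def linxMask (n s : ℕ) (C M : Matrix (Fin n) (Fin n) ℝ) : ℝ :=
  sSup (fLinx (Matrix.hadamard C M) '' PP n s)

lemma diag_fin_two' (x : Fin 2 → ℝ) : Matrix.diagonal x = !![x 0, 0; 0, x 1] := by
  ext i j; fin_cases i <;> fin_cases j <;> simp [Matrix.diagonal_apply]

lemma det2' (a b t : ℝ) (x : Fin 2 → ℝ) (hx : x 0 + x 1 = 1) :
  (!![a,t;t,b] * Matrix.diagonal x * !![a,t;t,b] + Matrix.diagonal fun i => 1 - x i).det
  = (a * x 0 + b * x 1)^2 + x 0 * x 1 * (t^2 - a*b + 1)^2 := by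
  have h1 : x 1 = 1 - x 0 := by linarith
  rw [diag_fin_two', diag_fin_two' (fun i => 1 - x i)]
  simp [Matrix.mul_fin_two, Matrix.det_fin_two, Matrix.add_apply]
  rw [h1]; ring

lemma mem_PP_iff (x : Fin 2 → ℝ) :
    x ∈ PP 2 1 ↔ (x 0 + x 1 = 1 ∧ ∀ i, 0 ≤ x i ∧ x i ≤ 1) := by
  simp [PP, Fin.sum_univ_two]

/-- pointwise comparison of fLinx for two off-diagonal values. -/
lemma fLinx_le (a b t₁ t₂ : ℝ) (ha : 0 < a) (hb : 0 < b)
    (hkey : (t₁^2 - a*b + 1)^2 ≤ (t₂^2 - a*b + 1)^2)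
    (x : Fin 2 → ℝ) (hx : x ∈ PP 2 1) :
    fLinx !![a,t₁;t₁,b] x ≤ fLinx !![a,t₂;t₂,b] x := by
  rw [mem_PP_iff] at hx
  obtain ⟨hsum, hbd⟩ := hx
  obtain ⟨h00, h01⟩ := hbd 0
  obtain ⟨h10, h11⟩ := hbd 1
  rw [fLinx, fLinx, det2' a b t₁ x hsum, det2' a b t₂ x hsum]
  have hpos : 0 < (a * x 0 + b * x 1)^2 + x 0 * x 1 * (t₁^2 - a*b + 1)^2 := by
    have h1 : 0 < a * x 0 + b * x 1 := by
      rcases h00.lt_or_eq with h | h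
      · nlinarith [mul_pos ha h, mul_nonneg hb.le h10]
      · have hx1 : x 1 = 1 := by linarith
        rw [← h, hx1]; simpa using hb
    have h2 : 0 ≤ x 0 * x 1 * (t₁^2 - a*b + 1)^2 :=
      mul_nonneg (mul_nonneg h00 h10) (sq_nonneg _)
    nlinarith
  have hle : (a * x 0 + b * x 1)^2 + x 0 * x 1 * (t₁^2 - a*b + 1)^2
      ≤ (a * x 0 + b * x 1)^2 + x 0 * x 1 * (t₂^2 - a*b + 1)^2 := by
    have := mul_le_mul_of_nonneg_left hkey (mul_nonneg h00 h10)
    linarith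
  have := Real.log_le_log hpos hle
  linarith

/-- positivity and upper bound of fLinx on PP. -/
lemma fLinx_bdd (a b t c : ℝ) (ha : 0 < a) (hb : 0 < b) (ht : t^2 ≤ c^2)
    (x : Fin 2 → ℝ) (hx : x ∈ PP 2 1) :
    fLinx !![a,t;t,b] x ≤ (1/2) * Real.log ((a+b)^2 + (c^2 + a*b + 1)^2) := by
  rw [mem_PP_iff] at hx
  obtain ⟨hsum, hbd⟩ := hx
  obtain ⟨h00, h01⟩ := hbd 0
  obtain ⟨h10, h11⟩ := hbd 1
  rw [fLinx, det2' a b t x hsum]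
  have ht0 : 0 ≤ t^2 := sq_nonneg t
  have hpos : 0 < (a * x 0 + b * x 1)^2 + x 0 * x 1 * (t^2 - a*b + 1)^2 := by
    have h1 : 0 < a * x 0 + b * x 1 := by
      rcases h00.lt_or_eq with h | h
      · nlinarith [mul_pos ha h, mul_nonneg hb.le h10]
      · have hx1 : x 1 = 1 := by linarith
        rw [← h, hx1]; simpa using hb
    have h2 : 0 ≤ x 0 * x 1 * (t^2 - a*b + 1)^2 :=
      mul_nonneg (mul_nonneg h00 h10) (sq_nonneg _)
    nlinarith
  have hW : (t^2 - a*b + 1)^2 ≤ (c^2 + a*b + 1)^2 := by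
    have h5 : t^2 - a*b + 1 ≤ c^2 + a*b + 1 := by nlinarith
    have h6 : -(c^2 + a*b + 1) ≤ t^2 - a*b + 1 := by nlinarith
    exact sq_le_sq' h6 h5
  have hD : (a * x 0 + b * x 1)^2 + x 0 * x 1 * (t^2 - a*b + 1)^2
      ≤ (a+b)^2 + (c^2 + a*b + 1)^2 := by
    have hT1 : (a * x 0 + b * x 1)^2 ≤ (a+b)^2 := by
      have hn : 0 ≤ a * x 0 + b * x 1 :=
        add_nonneg (mul_nonneg ha.le h00) (mul_nonneg hb.le h10)
      have hub : a * x 0 + b * x 1 ≤ a + b := by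
        nlinarith [mul_le_mul_of_nonneg_left h01 ha.le, mul_le_mul_of_nonneg_left h11 hb.le]
      nlinarith
    have hx01 : x 0 * x 1 ≤ 1 := by nlinarith
    have hT2 : x 0 * x 1 * (t^2 - a*b + 1)^2 ≤ 1 * (c^2 + a*b + 1)^2 :=
      mul_le_mul hx01 hW (sq_nonneg _) (by norm_num)
    nlinarith
  have := Real.log_le_log hpos hD
  linarith

open scoped Classical in
theorem stmt_8 (a b c : ℝ) (hab : b ≤ a)
    (hC : (!![a, c; c, b] : Matrix (Fin 2) (Fin 2) ℝ).PosSemidef)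
    (mstar : ℝ)
    (hm : mstar =
      if c = 0 ∨ a * b ≤ 1 then 0
      else if c ^ 2 ≤ a * b - 1 then 1
      else Real.sqrt ((a * b - 1) / c ^ 2)) :
    ∀ M : Matrix (Fin 2) (Fin 2) ℝ, IsMask M →
      linxMask 2 1 !![a, c; c, b] !![1, mstar; mstar, 1]
        ≤ linxMask 2 1 !![a, c; c, b] M := by
  rintro M ⟨hMpsd, hMdiag⟩
  set m := M 0 1 with hmdef
  have hsym : M 1 0 = m := by
    have := hMpsd.1
    rw [Matrix.IsHermitian] at this
    have h2 := congrFun (congrFun this 0) 1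
    simpa [Matrix.conjTranspose_apply] using h2
  have hHadM : Matrix.hadamard !![a,c;c,b] M = !![a, c*m; c*m, b] := by
    ext i j; fin_cases i <;> fin_cases j <;>
      simp [Matrix.hadamard_apply, hMdiag 0, hMdiag 1, hsym, hmdef]
  have hHadS : Matrix.hadamard !![a,c;c,b] !![1,mstar;mstar,1] = !![a, c*mstar; c*mstar, b] := by
    ext i j; fin_cases i <;> fin_cases j <;> simp [Matrix.hadamard_apply]
  rw [linxMask, linxMask, hHadM, hHadS]
  by_cases hc0 : c = 0
  · subst hc0; norm_num
  -- c ≠ 0 from now on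
  have hm2 : m^2 ≤ 1 := by
    have hq := hMpsd.dotProduct_mulVec_nonneg ![m, -1]
    simp [dotProduct, Matrix.mulVec, Fin.sum_univ_two, hMdiag 0, hMdiag 1, hsym] at hq
    nlinarith [hq]
  have hc2 : 0 < c^2 := by positivity
  -- a, b > 0
  have hapos : 0 < a ∧ 0 < b := by
    have h1 := hC.dotProduct_mulVec_nonneg ![1, 0]
    have h2 := hC.dotProduct_mulVec_nonneg ![0, 1]
    have h3 := hC.dotProduct_mulVec_nonneg ![1, -c]
    have h4 := hC.dotProduct_mulVec_nonneg ![-c, a]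
    simp [dotProduct, Matrix.mulVec, Fin.sum_univ_two] at h1 h2 h3 h4
    constructor
    · rcases lt_or_eq_of_le h1 with h | h
      · exact h
      · exfalso; nlinarith
    · rcases lt_or_eq_of_le h2 with h | h
      · exact h
      · exfalso
        rw [← h] at h3 h4
        have ha : 0 < a := by nlinarith
        nlinarith [mul_pos ha hc2]
  obtain ⟨ha, hb⟩ := hapos
  -- key inequality
  have ht2a : (c*m)^2 ≤ c^2 := by nlinarith [sq_nonneg c]
  have ht2b : 0 ≤ (c*m)^2 := sq_nonneg _
  have hkey : ((c*mstar)^2 - a*b + 1)^2 ≤ ((c*m)^2 - a*b + 1)^2 := by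
    by_cases h1 : a * b ≤ 1
    · rw [hm, if_pos (Or.inr h1)]
      nlinarith
    · rw [hm, if_neg (by push_neg; exact ⟨hc0, by linarith⟩)]
      by_cases h2 : c^2 ≤ a*b - 1
      · rw [if_pos h2]
        nlinarith
      · rw [if_neg h2]
        push_neg at h1 h2
        have hq : (0:ℝ) ≤ (a*b - 1)/c^2 := div_nonneg (by linarith) hc2.le
        have hsq : (c * Real.sqrt ((a*b-1)/c^2))^2 = a*b - 1 := by
          rw [mul_pow, Real.sq_sqrt hq]
          field_simp
        rw [hsq]
        nlinarith [sq_nonneg ((c*m)^2 - a*b + 1)]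
  -- sSup comparison
  have hne : (PP 2 1).Nonempty := by
    refine ⟨![1, 0], ?_⟩
    rw [mem_PP_iff]
    constructor
    · norm_num
    · intro i; fin_cases i <;> norm_num
  have hbdd : BddAbove (fLinx !![a, c*m; c*m, b] '' PP 2 1) := by
    refine ⟨(1/2) * Real.log ((a+b)^2 + (c^2 + a*b + 1)^2), ?_⟩
    rintro y ⟨x, hx, rfl⟩
    exact fLinx_bdd a b (c*m) c ha hb ht2a x hx
  apply csSup_le (hne.image _)
  rintro y ⟨x, hx, rfl⟩
  refine le_trans (fLinx_le a b (c*mstar) (c*m) ha hb hkey x hx) ?_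
  exact le_csSup hbdd ⟨x, hx, rfl⟩
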